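/- Assume ad < bc, b,d > 0, λ, μ continuous and strictly positive on [a/b, c/d]. Define for x ∈ (a/b, c/d): ψ₁(x) = K/(bx−a) · exp(∫_{x₀}^x (λ(y)/(by−a) − μ(y)/(c−dy)) dy) and ψ₂(x) = K/(c−dx) · exp(∫_{x₀}^x (λ(y)/(by−a) − μ(y)/(c−dy)) dy), with K > 0 and x₀ ∈ (a/b, c/d). Then (ψ₁, ψ₂) satisfies the stationary system: d/dx[(a−bx)ψ₁(x)] = −λ(x)ψ₁(x) + μ(x)ψ₂(x) and d/dx[(c−dx)ψ₂(x)] = λ(x)ψ₁(x) − μ(x)ψ₂(x) for all x ∈ (a/b, c/d). -/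

import Mathlib

open Set Filter MeasureTheory intervalIntegral

theorem stmt_4 (a b c d K x₀ : ℝ) (lam μ : ℝ → ℝ)
    (hb : 0 < b) (hd : 0 < d) (habcd : a * d < b * c)
    (hK : 0 < K) (hx₀ : x₀ ∈ Ioo (a/b) (c/d))
    (hlam_cont : ContinuousOn lam (Icc (a/b) (c/d)))
    (hμ_cont : ContinuousOn μ (Icc (a/b) (c/d)))
    (hlam : ∀ x ∈ Icc (a/b) (c/d), 0 < lam x)
    (hμ : ∀ x ∈ Icc (a/b) (c/d), 0 < μ x)
    (ψ₁ ψ₂ : ℝ → ℝ)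
    (hψ₁ : ∀ x ∈ Ioo (a/b) (c/d),
      ψ₁ x = K / (b*x - a) *
        Real.exp (∫ y in x₀..x, (lam y / (b*y - a) - μ y / (c - d*y))))
    (hψ₂ : ∀ x ∈ Ioo (a/b) (c/d),
      ψ₂ x = K / (c - d*x) *
        Real.exp (∫ y in x₀..x, (lam y / (b*y - a) - μ y / (c - d*y)))) :
    ∀ x ∈ Ioo (a/b) (c/d),
      HasDerivAt (fun y => (a - b*y) * ψ₁ y) (-(lam x) * ψ₁ x + μ x * ψ₂ x) x ∧
      HasDerivAt (fun y => (c - d*y) * ψ₂ y) (lam x * ψ₁ x - μ x * ψ₂ x) x := by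
  set g : ℝ → ℝ := fun y => lam y / (b*y - a) - μ y / (c - d*y) with hg
  set S : Set ℝ := Ioo (a/b) (c/d) with hS
  have hSopen : IsOpen S := isOpen_Ioo
  have hden1 : ∀ y ∈ S, 0 < b*y - a := by
    intro y hy
    have := hy.1
    rw [div_lt_iff₀ hb] at this
    linarith [this]
  have hden2 : ∀ y ∈ S, 0 < c - d*y := by
    intro y hy
    have := hy.2
    rw [lt_div_iff₀ hd] at this
    linarith [this]
  have hgcont : ContinuousOn g S := by
    apply ContinuousOn.sub
    · exact (hlam_cont.mono Ioo_subset_Icc_self).div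
        (by fun_prop) (fun y hy => (hden1 y hy).ne')
    · exact (hμ_cont.mono Ioo_subset_Icc_self).div
        (by fun_prop) (fun y hy => (hden2 y hy).ne')
  intro x hx
  have hb1 := hden1 x hx
  have hb2 := hden2 x hx
  -- derivative of the integral
  have hFderiv : HasDerivAt (fun t => ∫ y in x₀..t, g y) (g x) x := by
    apply intervalIntegral.integral_hasDerivAt_right
    · apply ContinuousOn.intervalIntegrable
      apply hgcont.mono
      intro y hy
      rcases le_total x₀ x with h | h
      · rw [uIcc_of_le h] at hy
        exact ⟨lt_of_lt_of_le hx₀.1 hy.1, lt_of_le_of_lt hy.2 hx.2⟩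
      · rw [uIcc_of_ge h] at hy
        exact ⟨lt_of_lt_of_le hx.1 hy.1, lt_of_le_of_lt hy.2 hx₀.2⟩
    · exact (ContinuousOn.stronglyMeasurableAtFilter hSopen hgcont) x hx
    · exact hgcont.continuousAt (hSopen.mem_nhds hx)
  set F : ℝ → ℝ := fun t => ∫ y in x₀..t, g y with hF
  set E : ℝ := Real.exp (F x) with hE
  have hE1 : HasDerivAt (fun t => Real.exp (F t)) (E * g x) x := hFderiv.exp
  have hψ₁x : ψ₁ x = K / (b*x - a) * E := hψ₁ x hx
  have hψ₂x : ψ₂ x = K / (c - d*x) * E := hψ₂ x hx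
  constructor
  · have h1 : HasDerivAt (fun t => -K * Real.exp (F t)) (-K * (E * g x)) x :=
      hE1.const_mul (-K)
    have heq : (fun y => (a - b*y) * ψ₁ y) =ᶠ[nhds x] (fun t => -K * Real.exp (F t)) := by
      filter_upwards [hSopen.mem_nhds hx] with y hy
      rw [hψ₁ y hy]
      have := (hden1 y hy).ne'
      field_simp
      ring
    have := h1.congr_of_eventuallyEq heq
    refine this.congr_deriv ?_
    rw [hψ₁x, hψ₂x, hg]
    field_simp
    ring
  · have h1 : HasDerivAt (fun t => K * Real.exp (F t)) (K * (E * g x)) x :=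
      hE1.const_mul K
    have heq : (fun y => (c - d*y) * ψ₂ y) =ᶠ[nhds x] (fun t => K * Real.exp (F t)) := by
      filter_upwards [hSopen.mem_nhds hx] with y hy
      rw [hψ₂ y hy]
      have := (hden2 y hy).ne'
      field_simp
      rfl
    have := h1.congr_of_eventuallyEq heq
    refine this.congr_deriv ?_
    rw [hψ₁x, hψ₂x, hg]
    field_simp
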